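/- arXiv:2601.17563 — 4 statements merged into one kernel-verified Lean document; each statement's English description precedes it below -/
import Mathlib

section
/- Let E and F be topological spaces and let f : E × F → ℝ be a continuous function. Let (x_k) in E and (y_k) in F be sequences produced by alternating exact minimization, i.e., for every k, f(x_{k+1}, y_k) ≤ f(x, y_k) for all x ∈ E, and f(x_{k+1}, y_{k+1}) ≤ f(x_{k+1}, y) for all y ∈ F. If x_k → x* and y_k → y*, then (x*, y*) is a coordinatewise minimizer of f: f(x*, y*) ≤ f(x, y*) for all x ∈ E, and f(x*, y*) ≤ f(x*, y) for all y ∈ F. -/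
open Filter Topology

/-- Limit points of alternating exact minimization are coordinatewise minimizers. -/
theorem alternating_minimization_limit_coordinatewise_min
    {E F : Type*} [TopologicalSpace E] [TopologicalSpace F]
    (f : E × F → ℝ) (hf : Continuous f) (x : ℕ → E) (y : ℕ → F)
    (hx : ∀ k, ∀ x' : E, f (x (k + 1), y k) ≤ f (x', y k))
    (hy : ∀ k, ∀ y' : F, f (x (k + 1), y (k + 1)) ≤ f (x (k + 1), y'))
    (xs : E) (ys : F)
    (hxs : Tendsto x atTop (𝓝 xs)) (hys : Tendsto y atTop (𝓝 ys)) :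
    (∀ x' : E, f (xs, ys) ≤ f (x', ys)) ∧ (∀ y' : F, f (xs, ys) ≤ f (xs, y')) := by
  have hxs' : Tendsto (fun k => x (k + 1)) atTop (𝓝 xs) :=
    hxs.comp (tendsto_add_atTop_nat 1)
  have hys' : Tendsto (fun k => y (k + 1)) atTop (𝓝 ys) :=
    hys.comp (tendsto_add_atTop_nat 1)
  constructor
  · intro x'
    have h1 : Tendsto (fun k => f (x (k + 1), y k)) atTop (𝓝 (f (xs, ys))) :=
      (hf.tendsto _).comp (hxs'.prodMk_nhds hys)
    have h2 : Tendsto (fun k => f (x', y k)) atTop (𝓝 (f (x', ys))) :=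
      (hf.tendsto _).comp (tendsto_const_nhds.prodMk_nhds hys)
    exact le_of_tendsto_of_tendsto' h1 h2 (fun k => hx k x')
  · intro y'
    have h1 : Tendsto (fun k => f (x (k + 1), y (k + 1))) atTop (𝓝 (f (xs, ys))) :=
      (hf.tendsto _).comp (hxs'.prodMk_nhds hys')
    have h2 : Tendsto (fun k => f (x (k + 1), y')) atTop (𝓝 (f (xs, y'))) :=
      (hf.tendsto _).comp (hxs'.prodMk_nhds tendsto_const_nhds)
    exact le_of_tendsto_of_tendsto' h1 h2 (fun k => hy k y')
end

section
/- Let P and Q be probability measures on a measurable space X, let μ = P + Q, and let p and q denote (real-valued versions of) the Radon–Nikodym derivatives dP/dμ and dQ/dμ. Then for every measurable D : X → ℝ with 0 < D(x) < 1 for all x, such that log ∘ D is P-integrable, log ∘ (1 − D) is Q-integrable, log ∘ p is P-integrable, and log ∘ q is Q-integrable, we have ∫ log(D) dP + ∫ log(1 − D) dQ ≤ ∫ log(p) dP + ∫ log(q) dQ. In particular the discriminator D* = p = dP/d(P+Q) maximizes the adversarial objective among all discriminators with values in (0, 1). -/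
open MeasureTheory

/-- Key estimate: for `ν ≪ μ` with density `r = dν/dμ`, and any measurable
`f` with values in `(0, 1]`, we have `∫ log f dν ≤ ∫ log r dν + (∫ f dμ - 1)`.
This follows from `log x ≤ x - 1`. -/
lemma gan_aux {X : Type*} [MeasurableSpace X] (ν μ : Measure X)
    [IsProbabilityMeasure ν] [IsFiniteMeasure μ] (hνμ : ν ≪ μ)
    (f : X → ℝ) (hf : Measurable f) (hf0 : ∀ x, 0 < f x) (hf1 : ∀ x, f x ≤ 1)
    (hIf : Integrable (fun x => Real.log (f x)) ν)
    (hIr : Integrable (fun x => Real.log ((ν.rnDeriv μ x).toReal)) ν) :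
    ∫ x, Real.log (f x) ∂ν ≤
      ∫ x, Real.log ((ν.rnDeriv μ x).toReal) ∂ν + (∫ x, f x ∂μ - 1) := by
  set r : X → ℝ := fun x => (ν.rnDeriv μ x).toReal with hr_def
  have hr_meas : Measurable r := (Measure.measurable_rnDeriv ν μ).ennreal_toReal
  have hr_pos : ∀ᵐ x ∂ν, 0 < r x := by
    filter_upwards [Measure.rnDeriv_pos hνμ, hνμ.ae_le (Measure.rnDeriv_lt_top ν μ)]
      with x h0 htop
    exact ENNReal.toReal_pos h0.ne' htop.ne
  have hr_nonneg : ∀ x, 0 ≤ r x := fun x => ENNReal.toReal_nonneg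
  -- the function `r • (f / r)` on `μ`
  have hg_eq : ∀ x, r x • (f x / r x) = if r x = 0 then 0 else f x := by
    intro x
    by_cases h : r x = 0
    · simp [h]
    · rw [if_neg h, smul_eq_mul, mul_div_assoc', mul_div_cancel_left₀ _ h]
  have hg_meas : Measurable fun x => r x • (f x / r x) :=
    hr_meas.smul (hf.div hr_meas)
  have hg_int : Integrable (fun x => r x • (f x / r x)) μ := by
    refine (integrable_const (1 : ℝ)).mono' hg_meas.aestronglyMeasurable ?_
    refine Filter.Eventually.of_forall fun x => ?_
    rw [hg_eq x]
    by_cases h : r x = 0 <;>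
      simp [h, abs_of_pos (hf0 x), (hf1 x)]
  -- so `f / r` is integrable w.r.t. `ν`
  have hfr_int : Integrable (fun x => f x / r x) ν :=
    (integrable_rnDeriv_smul_iff hνμ).mp hg_int
  -- pointwise bound `log f - log r ≤ f / r - 1` (ν-a.e.)
  have hstep1 : ∫ x, (Real.log (f x) - Real.log (r x)) ∂ν ≤
      ∫ x, (f x / r x - 1) ∂ν := by
    refine integral_mono_ae (hIf.sub hIr) (hfr_int.sub (integrable_const 1)) ?_
    filter_upwards [hr_pos] with x hx
    have hdiv : 0 < f x / r x := div_pos (hf0 x) hx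
    have := Real.log_le_sub_one_of_pos hdiv
    rwa [Real.log_div (hf0 x).ne' hx.ne'] at this
  -- `∫ f / r dν = ∫ r • (f / r) dμ ≤ ∫ f dμ`
  have hstep2 : ∫ x, f x / r x ∂ν ≤ ∫ x, f x ∂μ := by
    rw [← integral_rnDeriv_smul hνμ (f := fun x => f x / r x)]
    refine integral_mono hg_int ?_ ?_
    · refine (integrable_const (1 : ℝ)).mono' hf.aestronglyMeasurable ?_
      exact Filter.Eventually.of_forall fun x => by
        simp [abs_of_pos (hf0 x), hf1 x]
    · intro x
      show r x • (f x / r x) ≤ f x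
      rw [hg_eq x]
      by_cases h : r x = 0 <;> simp [h, (hf0 x).le]
  have h1 : ∫ x, (Real.log (f x) - Real.log (r x)) ∂ν =
      ∫ x, Real.log (f x) ∂ν - ∫ x, Real.log (r x) ∂ν := integral_sub hIf hIr
  have h2 : ∫ x, (f x / r x - 1) ∂ν = ∫ x, f x / r x ∂ν - 1 := by
    rw [integral_sub hfr_int (integrable_const 1)]
    simp
  rw [h1, h2] at hstep1
  linarith

/-- The GAN adversarial objective `∫ log D dP + ∫ log (1 - D) dQ` over
discriminators `D` with values in `(0, 1)` is maximized by the discriminator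
`D* = dP/d(P+Q)`, whose value is `∫ log p dP + ∫ log q dQ`. -/
theorem optimal_discriminator_maximizes_adversarial_objective
    {X : Type*} [MeasurableSpace X] (P Q : Measure X)
    [IsProbabilityMeasure P] [IsProbabilityMeasure Q]
    (p q : X → ℝ)
    (hp : p = fun x => (P.rnDeriv (P + Q) x).toReal)
    (hq : q = fun x => (Q.rnDeriv (P + Q) x).toReal) :
    ∀ D : X → ℝ, Measurable D → (∀ x, 0 < D x) → (∀ x, D x < 1) →
      Integrable (fun x => Real.log (D x)) P →
      Integrable (fun x => Real.log (1 - D x)) Q →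
      Integrable (fun x => Real.log (p x)) P →
      Integrable (fun x => Real.log (q x)) Q →
      ∫ x, Real.log (D x) ∂P + ∫ x, Real.log (1 - D x) ∂Q ≤
        ∫ x, Real.log (p x) ∂P + ∫ x, Real.log (q x) ∂Q := by
  intro D hD hD0 hD1 hIntD hInt1D hIntp hIntq
  subst hp hq
  have hPμ : P ≪ P + Q := Measure.absolutelyContinuous_of_le (Measure.le_add_right le_rfl)
  have hQμ : Q ≪ P + Q := Measure.absolutelyContinuous_of_le (Measure.le_add_left le_rfl)
  have hA := gan_aux P (P + Q) hPμ D hD hD0 (fun x => (hD1 x).le) hIntD hIntp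
  have hB := gan_aux Q (P + Q) hQμ (fun x => 1 - D x)
    (measurable_const.sub hD) (fun x => sub_pos.mpr (hD1 x))
    (fun x => sub_le_self _ (hD0 x).le) hInt1D hIntq
  -- `∫ D d(P+Q) + ∫ (1 - D) d(P+Q) = 2`
  have hD_int : Integrable D (P + Q) := by
    refine (integrable_const (1 : ℝ)).mono' hD.aestronglyMeasurable ?_
    exact Filter.Eventually.of_forall fun x => by
      simp [abs_of_pos (hD0 x), (hD1 x).le]
  have h1D_int : Integrable (fun x => 1 - D x) (P + Q) :=
    (integrable_const 1).sub hD_int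
  have hsum : ∫ x, D x ∂(P + Q) + ∫ x, (1 - D x) ∂(P + Q) = 2 := by
    rw [← integral_add hD_int h1D_int]
    have : ∀ x, D x + (1 - D x) = (1 : ℝ) := fun x => by ring
    simp only [this]
    simp [measure_univ]
    rw [measureReal_def, Measure.add_apply, measure_univ, measure_univ]; norm_num
  linarith
end

section
/- Let P and Q be probability measures on a measurable space X and let M = (1/2)·(P + Q) be their mixture. Let p and q denote (real-valued versions of) the Radon–Nikodym derivatives dP/d(P+Q) and dQ/d(P+Q), and assume the Kullback–Leibler divergences KL(P ‖ M) and KL(Q ‖ M) are finite and that log ∘ p is P-integrable and log ∘ q is Q-integrable. Then the value of the adversarial objective at the optimal discriminator satisfies ∫ log(p) dP + ∫ log(q) dQ = KL(P ‖ M) + KL(Q ‖ M) − log 4. Consequently, minimizing this value over Q is equivalent to minimizing the Jensen–Shannon divergence JSD(P ‖ Q) = (1/2)·KL(P ‖ M) + (1/2)·KL(Q ‖ M). -/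
open MeasureTheory ENNReal

/-- Real-valued Kullback–Leibler divergence `KL(P ‖ M) = ∫ log (dP/dM) dP`. -/
noncomputable def klDivReal {X : Type*} [MeasurableSpace X] (P M : Measure X) : ℝ :=
  ∫ x, Real.log ((P.rnDeriv M x).toReal) ∂P

/-- Jensen–Shannon divergence
`JSD(P ‖ Q) = (1/2) KL(P ‖ M) + (1/2) KL(Q ‖ M)` with `M = (1/2)(P + Q)`. -/
noncomputable def jsDivReal {X : Type*} [MeasurableSpace X] (P Q : Measure X) : ℝ :=
  (1 / 2) * klDivReal P (((1 : ℝ≥0∞) / 2) • (P + Q)) +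
    (1 / 2) * klDivReal Q (((1 : ℝ≥0∞) / 2) • (P + Q))

/-- Key pointwise identity: `log (dμ/d((1/2)ν)) = log 2 + log (dμ/dν)` a.e. `μ`. -/
lemma log_rnDeriv_half_smul {X : Type*} [MeasurableSpace X] (μ ν : Measure X)
    [IsFiniteMeasure μ] [SigmaFinite ν] (hac : μ ≪ ν) :
    ∀ᵐ x ∂μ, Real.log ((μ.rnDeriv (((1 : ℝ≥0∞) / 2) • ν) x).toReal)
      = Real.log 2 + Real.log ((μ.rnDeriv ν x).toReal) := by
  have h1 : μ.rnDeriv (((1 : ℝ≥0∞) / 2) • ν) =ᵐ[ν]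
      ((1 : ℝ≥0∞) / 2)⁻¹ • μ.rnDeriv ν :=
    Measure.rnDeriv_smul_right_of_ne_top μ ν (by norm_num) (by norm_num)
  filter_upwards [hac.ae_le h1, Measure.rnDeriv_pos hac,
    hac.ae_le (Measure.rnDeriv_lt_top μ ν)] with x hx hpos hlt
  rw [hx]
  simp only [Pi.smul_apply, smul_eq_mul]
  rw [ENNReal.toReal_mul]
  have h2 : (((1 : ℝ≥0∞) / 2)⁻¹).toReal = 2 := by norm_num
  rw [h2, Real.log_mul (by norm_num) (ENNReal.toReal_pos hpos.ne' hlt.ne).ne']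

/-- The value of the adversarial objective at the optimal discriminator equals
`KL(P ‖ M) + KL(Q ‖ M) - log 4 = 2 ⬝ JSD(P ‖ Q) - log 4`, where `M = (1/2)(P + Q)`. -/
theorem adversarial_value_eq_jsd
    {X : Type*} [MeasurableSpace X] (P Q : Measure X)
    [IsProbabilityMeasure P] [IsProbabilityMeasure Q]
    (M : Measure X) (hM : M = ((1 : ℝ≥0∞) / 2) • (P + Q))
    (p q : X → ℝ)
    (hp : p = fun x => (P.rnDeriv (P + Q) x).toReal)
    (hq : q = fun x => (Q.rnDeriv (P + Q) x).toReal)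
    (hKLP : Integrable (fun x => Real.log ((P.rnDeriv M x).toReal)) P)
    (hKLQ : Integrable (fun x => Real.log ((Q.rnDeriv M x).toReal)) Q)
    (hplog : Integrable (fun x => Real.log (p x)) P)
    (hqlog : Integrable (fun x => Real.log (q x)) Q) :
    ∫ x, Real.log (p x) ∂P + ∫ x, Real.log (q x) ∂Q =
        klDivReal P M + klDivReal Q M - Real.log 4 ∧
      ∫ x, Real.log (p x) ∂P + ∫ x, Real.log (q x) ∂Q =
        2 * jsDivReal P Q - Real.log 4 := by
  subst hp hq hM
  have hacP : P ≪ P + Q := Measure.AbsolutelyContinuous.rfl.add_right Q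
  have hacQ : Q ≪ P + Q := (Measure.le_add_left le_rfl).absolutelyContinuous
  have hKLP' : klDivReal P (((1 : ℝ≥0∞) / 2) • (P + Q))
      = Real.log 2 + ∫ x, Real.log ((P.rnDeriv (P + Q) x).toReal) ∂P := by
    rw [klDivReal]
    rw [integral_congr_ae (log_rnDeriv_half_smul P (P + Q) hacP)]
    rw [integral_add (integrable_const _) hplog]
    simp
  have hKLQ' : klDivReal Q (((1 : ℝ≥0∞) / 2) • (P + Q))
      = Real.log 2 + ∫ x, Real.log ((Q.rnDeriv (P + Q) x).toReal) ∂Q := by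
    rw [klDivReal]
    rw [integral_congr_ae (log_rnDeriv_half_smul Q (P + Q) hacQ)]
    rw [integral_add (integrable_const _) hqlog]
    simp
  have hlog4 : Real.log 4 = 2 * Real.log 2 := by
    rw [show (4:ℝ) = 2 ^ 2 by norm_num, Real.log_pow]; push_cast; ring
  constructor
  · rw [hKLP', hKLQ', hlog4]; ring
  · rw [jsDivReal, hKLP', hKLQ', hlog4]; ring
end

section
/- Let S and A be real normed vector spaces and let T : S × A → S satisfy ‖T(s, a) − T(s̄, ā)‖ ≤ L_s·‖s − s̄‖ + L_a·‖a − ā‖ for all s, s̄ ∈ S and a, ā ∈ A, with constants L_s, L_a ≥ 0. Let π, π_E : S → A be policies with sup_{s} ‖π(s) − π_E(s)‖ ≤ ε, and suppose π_E is K-Lipschitz. Define trajectories from a common initial state s_0 = ŝ_0 by s_{t+1} = T(s_t, π(s_t)) and ŝ_{t+1} = T(ŝ_t, π_E(ŝ_t)). Then for every t, ‖s_t − ŝ_t‖ ≤ L_a·ε·∑_{i<t} (L_s + L_a·K)^i. -/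
/-- Compounding-error bound: if the dynamics `T` are Lipschitz in state and
action, the agent's policy `π` is uniformly `ε`-close to the `K`-Lipschitz
teacher policy `πE`, and both trajectories start from the same state, then
`‖s t - sE t‖ ≤ La * ε * ∑_{i<t} (Ls + La * K) ^ i` for every `t`. -/
theorem trajectory_compounding_error_bound
    {S A : Type*} [NormedAddCommGroup S] [NormedSpace ℝ S]
    [NormedAddCommGroup A] [NormedSpace ℝ A]
    (T : S × A → S) (Ls La : ℝ) (hLs : 0 ≤ Ls) (hLa : 0 ≤ La)
    (hT : ∀ (x y : S) (a b : A),
      ‖T (x, a) - T (y, b)‖ ≤ Ls * ‖x - y‖ + La * ‖a - b‖)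
    (π πE : S → A) (ε : ℝ) (hclose : ∀ x : S, ‖π x - πE x‖ ≤ ε)
    (K : ℝ) (hK : 0 ≤ K) (hπE : ∀ x y : S, ‖πE x - πE y‖ ≤ K * ‖x - y‖)
    (s sE : ℕ → S) (h0 : s 0 = sE 0)
    (hs : ∀ t, s (t + 1) = T (s t, π (s t)))
    (hsE : ∀ t, sE (t + 1) = T (sE t, πE (sE t))) :
    ∀ t, ‖s t - sE t‖ ≤ La * ε * ∑ i ∈ Finset.range t, (Ls + La * K) ^ i := by
  have hε : 0 ≤ ε := le_trans (norm_nonneg _) (hclose 0)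
  intro t
  induction t with
  | zero => simp [h0]
  | succ t ih =>
    have key : ‖s (t+1) - sE (t+1)‖ ≤ (Ls + La * K) * ‖s t - sE t‖ + La * ε := by
      rw [hs, hsE]
      calc ‖T (s t, π (s t)) - T (sE t, πE (sE t))‖
          ≤ Ls * ‖s t - sE t‖ + La * ‖π (s t) - πE (sE t)‖ := hT _ _ _ _
        _ ≤ Ls * ‖s t - sE t‖ + La * (ε + K * ‖s t - sE t‖) := by
            gcongr
            calc ‖π (s t) - πE (sE t)‖
                ≤ ‖π (s t) - πE (s t)‖ + ‖πE (s t) - πE (sE t)‖ := norm_sub_le_norm_sub_add_norm_sub _ _ _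
              _ ≤ ε + K * ‖s t - sE t‖ := add_le_add (hclose _) (hπE _ _)
        _ = (Ls + La * K) * ‖s t - sE t‖ + La * ε := by ring
    have hc : 0 ≤ Ls + La * K := by positivity
    calc ‖s (t+1) - sE (t+1)‖
        ≤ (Ls + La * K) * ‖s t - sE t‖ + La * ε := key
      _ ≤ (Ls + La * K) * (La * ε * ∑ i ∈ Finset.range t, (Ls + La * K) ^ i) + La * ε := by
          gcongr
      _ = La * ε * ∑ i ∈ Finset.range (t+1), (Ls + La * K) ^ i := by
          rw [geom_sum_succ]; ring
end
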